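/- Let A be a real m × n matrix, b ∈ ℝ^m, and let x* ∈ ℝ^n with support I = supp(x*) be the unique minimizer of ‖x‖₁ over all x ∈ ℝ^n with A x = b. Then the columns of A indexed by I are linearly independent (ker(A_I) = {0}) and there exists ω ∈ ℝ^m such that A_Iᵀ ω = sign(x*)_I and ‖A_{Iᶜ}ᵀ ω‖_∞ < 1. -/

import Mathlib

open Finset

private lemma abs_add_eq_abs_add_sign {a t : ℝ} (ha : a ≠ 0) (h : |t| ≤ |a|) :
    |a + t| = |a| + Real.sign a * t := by
  rcases ha.lt_or_gt with hlt | hgt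
  · rw [Real.sign_of_neg hlt]
    rw [abs_of_neg hlt] at h
    rw [abs_of_nonpos (by cases abs_le.1 h; linarith)]
    rw [abs_of_neg hlt]; ring
  · rw [Real.sign_of_pos hgt]
    rw [abs_of_pos hgt] at h
    rw [abs_of_nonneg (by cases abs_le.1 h; linarith)]
    rw [abs_of_pos hgt]; ring

/-- The linear functional `v ↦ -∑_{i ∈ I} sign(xs i) * v i`. -/
private noncomputable def Fsupp {n : ℕ} (xs : Fin n → ℝ) : (Fin n → ℝ) →ₗ[ℝ] ℝ where
  toFun v := -∑ i, (if xs i ≠ 0 then Real.sign (xs i) * v i else 0)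
  map_add' v w := by
    simp only [Pi.add_apply, mul_add]
    rw [← neg_add, ← Finset.sum_add_distrib]
    congr 1; congr 1; funext i; split <;> simp
  map_smul' c v := by
    simp only [Pi.smul_apply, smul_eq_mul, RingHom.id_apply]
    rw [mul_neg, Finset.mul_sum]
    refine congrArg Neg.neg (Finset.sum_congr rfl fun i _ => ?_); split <;> [ring; simp]

/-- Key inequality: positivity of the directional derivative. -/
private lemma key_pos {m n : ℕ}
    (A : Matrix (Fin m) (Fin n) ℝ) (b : Fin m → ℝ)
    (xs : Fin n → ℝ) (hxs : A.mulVec xs = b)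
    (huniq : ∀ x : Fin n → ℝ, A.mulVec x = b → x ≠ xs → ∑ i, |xs i| < ∑ i, |x i|)
    (v : Fin n → ℝ) (hv : A.mulVec v = 0) (hv0 : v ≠ 0) :
    0 < ∑ i, (if xs i ≠ 0 then Real.sign (xs i) * v i else |v i|) := by
  obtain ⟨i₀, hi₀⟩ : ∃ i, v i ≠ 0 := Function.ne_iff.1 hv0
  have hne : (Finset.univ : Finset (Fin n)).Nonempty := ⟨i₀, Finset.mem_univ i₀⟩
  set f : Fin n → ℝ := fun i => if xs i = 0 then 1 else |xs i| / (|v i| + 1) with hf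
  set ε : ℝ := Finset.univ.inf' hne f with hεdef
  have hε : 0 < ε := by
    rw [hεdef, Finset.lt_inf'_iff]
    intro i _
    by_cases h : xs i = 0
    · simp [hf, h]
    · simp only [hf, if_neg h]
      exact div_pos (abs_pos.2 h) (by positivity)
  have hbound : ∀ i, xs i ≠ 0 → |ε * v i| ≤ |xs i| := by
    intro i hi
    have h1 : ε ≤ |xs i| / (|v i| + 1) := by
      have h0 := Finset.inf'_le f (Finset.mem_univ i)
      simp only [hf, if_neg hi] at h0
      exact h0
    rw [abs_mul, abs_of_pos hε]
    have h2 : (0:ℝ) < |v i| + 1 := by positivity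
    have h3 : ε * |v i| ≤ (|xs i| / (|v i| + 1)) * |v i| :=
      mul_le_mul_of_nonneg_right h1 (abs_nonneg _)
    have h4 : (|xs i| / (|v i| + 1)) * |v i| ≤ |xs i| := by
      rw [div_mul_eq_mul_div, div_le_iff₀ h2]
      nlinarith [abs_nonneg (xs i), abs_nonneg (v i)]
    linarith
  have hfeas : A.mulVec (xs + ε • v) = b := by
    rw [Matrix.mulVec_add, Matrix.mulVec_smul, hv, hxs]; simp
  have hneq : xs + ε • v ≠ xs := by
    intro h
    have := congrFun h i₀
    simp only [Pi.add_apply, Pi.smul_apply, smul_eq_mul] at this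
    have : ε * v i₀ = 0 := by linarith
    rcases mul_eq_zero.1 this with h' | h'
    · exact absurd h' (ne_of_gt hε)
    · exact hi₀ h'
  have hlt := huniq (xs + ε • v) hfeas hneq
  have hS : ∑ i, |xs i + ε * v i|
      = ∑ i, |xs i| + ε * ∑ i, (if xs i ≠ 0 then Real.sign (xs i) * v i else |v i|) := by
    rw [Finset.mul_sum, ← Finset.sum_add_distrib]
    refine Finset.sum_congr rfl fun i _ => ?_
    by_cases h : xs i = 0
    · simp [h, abs_mul, abs_of_pos hε]
    · rw [if_pos h, abs_add_eq_abs_add_sign h (hbound i h)]; ring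
  simp only [Pi.add_apply, Pi.smul_apply, smul_eq_mul] at hlt
  rw [hS] at hlt
  nlinarith

theorem dual_certificate_of_l1_unique {m n : ℕ}
    (A : Matrix (Fin m) (Fin n) ℝ) (b : Fin m → ℝ)
    (xs : Fin n → ℝ) (hxs : A.mulVec xs = b)
    (huniq : ∀ x : Fin n → ℝ, A.mulVec x = b → x ≠ xs → ∑ i, |xs i| < ∑ i, |x i|) :
    (∀ v : Fin n → ℝ, (∀ i, xs i = 0 → v i = 0) → A.mulVec v = 0 → v = 0) ∧
      ∃ ω : Fin m → ℝ,
        (∀ i, xs i ≠ 0 → ∑ j, A j i * ω j = Real.sign (xs i)) ∧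
        (∀ i, xs i = 0 → |∑ j, A j i * ω j| < 1) := by
  classical
  set φ : (Fin n → ℝ) → ℝ := fun v => ∑ i, (if xs i ≠ 0 then Real.sign (xs i) * v i else |v i|)
    with hφ
  -- Part 1
  have part1 : ∀ v : Fin n → ℝ, (∀ i, xs i = 0 → v i = 0) → A.mulVec v = 0 → v = 0 := by
    intro v hsupp hker
    by_contra hv0
    have h1 := key_pos A b xs hxs huniq v hker hv0
    have h2 := key_pos A b xs hxs huniq (-v)
      (by rw [Matrix.mulVec_neg, hker, neg_zero]) (neg_ne_zero.2 hv0)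
    have e : ∀ w : Fin n → ℝ, (∀ i, xs i = 0 → w i = 0) →
        ∑ i, (if xs i ≠ 0 then Real.sign (xs i) * w i else |w i|)
          = ∑ i, Real.sign (xs i) * w i := by
      intro w hw
      refine Finset.sum_congr rfl fun i _ => ?_
      by_cases h : xs i = 0
      · simp [h, hw i h]
      · rw [if_pos h]
    rw [e v hsupp] at h1
    rw [e (-v) (fun i hi => by simp [hsupp i hi])] at h2
    simp only [Pi.neg_apply, mul_neg, Finset.sum_neg_distrib] at h2
    linarith
  refine ⟨part1, ?_⟩
  -- continuity and homogeneity of φ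
  have hφcont : Continuous φ := by
    apply continuous_finset_sum
    intro i _
    by_cases h : xs i = 0
    · simp only [h, ne_eq, not_true_eq_false, if_false]
      exact (continuous_apply i).abs
    · simp only [ne_eq, h, not_false_eq_true, if_true]
      exact continuous_const.mul (continuous_apply i)
  have hφhom : ∀ (c : ℝ), 0 ≤ c → ∀ v, φ (c • v) = c * φ v := by
    intro c hc v
    simp only [hφ, Finset.mul_sum, Pi.smul_apply, smul_eq_mul]
    refine Finset.sum_congr rfl fun i _ => ?_
    by_cases h : xs i = 0
    · simp [h, abs_mul, abs_of_nonneg hc]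
    · simp only [ne_eq, h, not_false_eq_true, if_true]; ring
  -- normalization
  set S : Set (Fin n → ℝ) := {v | A.mulVec v = 0 ∧ ∑ i, |v i| = 1} with hSdef
  have hsumpos : ∀ v : Fin n → ℝ, v ≠ 0 → 0 < ∑ i, |v i| := by
    intro v hv0
    obtain ⟨i₀, hi₀⟩ := Function.ne_iff.1 hv0
    have : (0:ℝ) < |v i₀| := abs_pos.2 hi₀
    have hle : |v i₀| ≤ ∑ i, |v i| :=
      Finset.single_le_sum (fun i _ => abs_nonneg (v i)) (Finset.mem_univ i₀)
    linarith
  have hnorm : ∀ v : Fin n → ℝ, A.mulVec v = 0 → v ≠ 0 → (∑ i, |v i|)⁻¹ • v ∈ S := by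
    intro v hker hv0
    have hr := hsumpos v hv0
    constructor
    · rw [Matrix.mulVec_smul, hker]; simp
    · simp only [Pi.smul_apply, smul_eq_mul, abs_mul, abs_of_pos (inv_pos.2 hr)]
      rw [← Finset.mul_sum]
      field_simp
  -- the margin δ
  have hδex : ∃ δ : ℝ, 0 < δ ∧ δ ≤ 1 ∧ ∀ v, A.mulVec v = 0 → δ * ∑ i, |v i| ≤ φ v := by
    by_cases hS : S.Nonempty
    · have hcomp : IsCompact S := by
        apply Metric.isCompact_of_isClosed_isBounded
        · apply IsClosed.inter
          · exact isClosed_eq (LinearMap.continuous_of_finiteDimensional A.mulVecLin)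
              continuous_const
          · exact isClosed_eq (continuous_finset_sum _ fun i _ => (continuous_apply i).abs)
              continuous_const
        · rw [isBounded_iff_forall_norm_le]
          refine ⟨1, fun v hv => ?_⟩
          rw [pi_norm_le_iff_of_nonneg zero_le_one]
          intro i
          have := Finset.single_le_sum (fun i _ => abs_nonneg (v i)) (Finset.mem_univ i)
          rw [Real.norm_eq_abs]
          rw [hv.2] at this
          exact this
      obtain ⟨v₀, hv₀S, hmin⟩ := hcomp.exists_isMinOn hS hφcont.continuousOn
      have hv₀0 : v₀ ≠ 0 := by
        intro h
        rw [h] at hv₀S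
        simp [hSdef] at hv₀S
      have hδ0 : 0 < φ v₀ := key_pos A b xs hxs huniq v₀ hv₀S.1 hv₀0
      refine ⟨min (φ v₀) 1, lt_min hδ0 one_pos, min_le_right _ _, ?_⟩
      intro v hvker
      by_cases hv0 : v = 0
      · simp [hv0, hφ]
      · have hr := hsumpos v hv0
        have hmem := hnorm v hvker hv0
        have h1 : φ v₀ ≤ φ ((∑ i, |v i|)⁻¹ • v) := hmin hmem
        rw [hφhom _ (by positivity) v] at h1
        have h2 : min (φ v₀) 1 ≤ φ v₀ := min_le_left _ _
        have h3 : (∑ i, |v i|)⁻¹ * φ v ≥ min (φ v₀) 1 := le_trans h2 h1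
        calc min (φ v₀) 1 * ∑ i, |v i| ≤ ((∑ i, |v i|)⁻¹ * φ v) * ∑ i, |v i| :=
              mul_le_mul_of_nonneg_right h3 (le_of_lt hr)
          _ = φ v := by field_simp
    · refine ⟨1, one_pos, le_refl 1, ?_⟩
      intro v hvker
      by_cases hv0 : v = 0
      · simp [hv0, hφ]
      · exact absurd ⟨_, hnorm v hvker hv0⟩ hS
  obtain ⟨δ, hδpos, hδle, hδ⟩ := hδex
  have h1δ : (0:ℝ) ≤ 1 - δ := by linarith
  -- the sublinear functional
  set p : (Fin n → ℝ) → ℝ := fun w => (1 - δ) * ∑ i, (if xs i = 0 then |w i| else 0) with hp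
  have hsplit : ∀ v : Fin n → ℝ, φ v
      = (∑ i, if xs i ≠ 0 then Real.sign (xs i) * v i else 0)
        + (∑ i, if xs i = 0 then |v i| else 0) := by
    intro v
    rw [hφ, ← Finset.sum_add_distrib]
    refine Finset.sum_congr rfl fun i _ => ?_
    by_cases h : xs i = 0 <;> simp [h]
  have hkey2 : ∀ v : Fin n → ℝ, A.mulVec v = 0 →
      -(∑ i, if xs i ≠ 0 then Real.sign (xs i) * v i else 0)
        ≤ (1 - δ) * ∑ i, (if xs i = 0 then |v i| else 0) := by
    intro v hv
    have h1 := hδ v hv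
    have h2 : ∑ i, (if xs i = 0 then |v i| else 0) ≤ ∑ i, |v i| :=
      Finset.sum_le_sum fun i _ => by
        by_cases h : xs i = 0 <;> simp [h, abs_nonneg]
    rw [hsplit v] at h1
    nlinarith [mul_le_mul_of_nonneg_left h2 (le_of_lt hδpos)]
  have hp_hom : ∀ c : ℝ, 0 < c → ∀ x, p (c • x) = c * p x := by
    intro c hc x
    simp only [hp, Pi.smul_apply, smul_eq_mul]
    have h : ∑ i, (if xs i = 0 then |c * x i| else 0)
        = c * ∑ i, (if xs i = 0 then |x i| else 0) := by
      rw [Finset.mul_sum]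
      refine Finset.sum_congr rfl fun i _ => ?_
      by_cases h : xs i = 0 <;> simp [h, abs_mul, abs_of_pos hc]
    rw [h]; ring
  have hp_add : ∀ x y, p (x + y) ≤ p x + p y := by
    intro x y
    simp only [hp, Pi.add_apply]
    rw [← mul_add, ← Finset.sum_add_distrib]
    refine mul_le_mul_of_nonneg_left (Finset.sum_le_sum fun i _ => ?_) h1δ
    by_cases h : xs i = 0
    · simpa [h] using abs_add_le (x i) (y i)
    · simp [h]
  have hfle : ∀ x : ((Fsupp xs).toPMap (LinearMap.ker A.mulVecLin)).domain,
      (Fsupp xs).toPMap (LinearMap.ker A.mulVecLin) x ≤ p x := by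
    intro x
    have hx : A.mulVec ↑x = 0 := by
      have h : (x : Fin n → ℝ) ∈ LinearMap.ker A.mulVecLin := x.2
      rwa [LinearMap.mem_ker, Matrix.mulVecLin_apply] at h
    change Fsupp xs (x : Fin n → ℝ) ≤ p x
    exact hkey2 ↑x hx
  obtain ⟨g, hg_eq, hg_le⟩ := exists_extension_of_le_sublinear
    ((Fsupp xs).toPMap (LinearMap.ker A.mulVecLin)) p hp_hom hp_add hfle
  -- coordinates of g
  set e : Fin n → Fin n → ℝ := fun i j => if i = j then 1 else 0 with he
  have hpe : ∀ i : Fin n, p (e i) = (1 - δ) * (if xs i = 0 then 1 else 0) := by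
    intro i
    simp only [hp]
    congr 1
    rw [Finset.sum_eq_single i]
    · by_cases h : xs i = 0 <;> simp [h, he]
    · intro j _ hj
      by_cases h : xs j = 0 <;> simp [h, he, (Ne.symm hj)]
    · simp
  have hpneg : ∀ w : Fin n → ℝ, p (-w) = p w := by
    intro w
    simp only [hp, Pi.neg_apply, abs_neg]
  have hgzero : ∀ i, xs i ≠ 0 → g (e i) = 0 := by
    intro i hi
    have h1 : g (e i) ≤ p (e i) := hg_le (e i)
    have h2 : -(g (e i)) ≤ p (e i) := by
      have := hg_le (-(e i))
      rwa [map_neg, hpneg] at this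
    rw [hpe i, if_neg hi, mul_zero] at h1 h2
    linarith
  have hgbound : ∀ i, xs i = 0 → |g (e i)| ≤ 1 - δ := by
    intro i hi
    have h1 : g (e i) ≤ p (e i) := hg_le (e i)
    have h2 : -(g (e i)) ≤ p (e i) := by
      have := hg_le (-(e i))
      rwa [map_neg, hpneg] at this
    rw [hpe i, if_pos hi, mul_one] at h1 h2
    exact abs_le.2 ⟨by linarith, h1⟩
  -- the certificate vector
  set c : Fin n → ℝ := fun i => if xs i = 0 then g (e i) else Real.sign (xs i) with hc
  have horth : ∀ v : Fin n → ℝ, A.mulVec v = 0 → ∑ i, c i * v i = 0 := by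
    intro v hv
    have hvK : v ∈ LinearMap.ker A.mulVecLin := by
      rw [LinearMap.mem_ker, Matrix.mulVecLin_apply, hv]
    have hgv : g v = ∑ i, v i * g (e i) := by
      rw [LinearMap.pi_apply_eq_sum_univ g v]
      refine Finset.sum_congr rfl fun i _ => ?_
      rw [smul_eq_mul]
    have hgF : g v = -(∑ i, if xs i ≠ 0 then Real.sign (xs i) * v i else 0) := by
      have h := hg_eq ⟨v, hvK⟩
      change g v = Fsupp xs v at h
      exact h
    have hsum : ∑ i, c i * v i
        = (∑ i, v i * g (e i)) + ∑ i, (if xs i ≠ 0 then Real.sign (xs i) * v i else 0) := by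
      rw [← Finset.sum_add_distrib]
      refine Finset.sum_congr rfl fun i _ => ?_
      by_cases h : xs i = 0
      · simp [hc, h, mul_comm]
      · simp [hc, h, hgzero i h]
    rw [hsum, ← hgv, hgF]
    ring
  -- realize c in the row space using orthogonal projection
  set rows : Fin m → EuclideanSpace ℝ (Fin n) := fun j => WithLp.toLp 2 (A j) with hrows
  set U : Submodule ℝ (EuclideanSpace ℝ (Fin n)) := Submodule.span ℝ (Set.range rows) with hU
  obtain ⟨u, hu, w, hw, hcuw⟩ := U.exists_add_mem_mem_orthogonal (WithLp.toLp 2 c)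
  have hw' := (Submodule.mem_orthogonal U w).1 hw
  have hAw : A.mulVec (WithLp.ofLp w) = 0 := by
    funext j
    have h := hw' (rows j) (Submodule.subset_span ⟨j, rfl⟩)
    simpa [PiLp.inner_apply, RCLike.inner_apply', Matrix.mulVec, dotProduct, hrows, mul_comm] using h
  have hww : (inner ℝ w w : ℝ) = 0 := by
    have h := horth (WithLp.ofLp w) hAw
    have h2 : (inner ℝ (u + w) w : ℝ) = inner ℝ w w := by
      rw [inner_add_left, hw' u hu, zero_add]
    rw [← hcuw] at h2
    rw [← h2, PiLp.inner_apply]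
    simpa [RCLike.inner_apply', mul_comm] using h
  have hw0 : w = 0 := inner_self_eq_zero.1 hww
  have hcU : WithLp.toLp 2 c ∈ U := by
    rw [hcuw, hw0, add_zero]; exact hu
  rw [hU, Submodule.mem_span_range_iff_exists_fun] at hcU
  obtain ⟨ω, hω⟩ := hcU
  have hωi : ∀ i, ∑ j, A j i * ω j = c i := by
    intro i
    have h1 : (∑ j, ω j • rows j) i = c i := by rw [hω]
    rw [← h1]
    simp [Finset.sum_apply, hrows, mul_comm]
  refine ⟨ω, fun i hi => ?_, fun i hi => ?_⟩
  · rw [hωi i, hc]; simp [hi]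
  · rw [hωi i, hc]
    simp only [if_pos hi]
    calc |g (e i)| ≤ 1 - δ := hgbound i hi
      _ < 1 := by linarith
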